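/- Let A be a nonempty finite alphabet, let F ⊆ A* be a recurrent set, and let X be a rational F-maximal bifix code. Then d_F(X) is finite and every subgroup of M(X*) contained in J_F(X) is isomorphic to a subgroup of the symmetric group on d_F(X) elements. In particular, if Z is a rational maximal bifix code of A* (so that d(Z) is finite), then every subgroup of M(Z*) contained in the minimum ideal J(Z) is isomorphic to a subgroup of the symmetric group on d(Z) elements. -/

import Mathlib

/-! Common definitions: words over a finite alphabet `A` are terms of `List A`,
concatenation being the monoid operation of the free monoid `A*`. -/

namespace PaperDefs

variable {A : Type*}

/-- `w` belongs to the Kleene star `X*` of `X`: it is a (possibly empty)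
concatenation of elements of `X`. -/
def InStar (X : Set (List A)) (w : List A) : Prop :=
  ∃ l : List (List A), (∀ u ∈ l, u ∈ X) ∧ l.flatten = w

/-- The language `X*`. -/
def star (X : Set (List A)) : Set (List A) := {w | InStar X w}

/-- A prefix code: a nonempty set of nonempty words, none of which is a proper
prefix of another. -/
def IsPrefixCode (X : Set (List A)) : Prop :=
  X.Nonempty ∧ (∀ w ∈ X, w ≠ []) ∧ ∀ u ∈ X, ∀ v ∈ X, u <+: v → u = v

/-- A suffix code. -/
def IsSuffixCode (X : Set (List A)) : Prop :=
  X.Nonempty ∧ (∀ w ∈ X, w ≠ []) ∧ ∀ u ∈ X, ∀ v ∈ X, u <:+ v → u = v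

/-- A bifix code. -/
def IsBifixCode (X : Set (List A)) : Prop := IsPrefixCode X ∧ IsSuffixCode X

/-- A factorial set contains all factors of its elements. -/
def Factorial (F : Set (List A)) : Prop := ∀ w ∈ F, ∀ u, u <:+: w → u ∈ F

/-- A recurrent set. -/
def Recurrent (F : Set (List A)) : Prop :=
  Factorial F ∧ F.Nonempty ∧ F ≠ {[]} ∧ ∀ u ∈ F, ∀ v ∈ F, ∃ w, u ++ w ++ v ∈ F

/-- A uniformly recurrent set. -/
def UniformlyRecurrent (F : Set (List A)) : Prop :=
  Recurrent F ∧ ∀ u ∈ F, ∃ n : ℕ, ∀ w ∈ F, n ≤ w.length → u <:+: w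

/-- A parse of `w` with respect to `X` : a triple `(v, x, u)` with `w = v x u`,
`v` has no suffix in `X`, `x ∈ X*`, and `u` has no prefix in `X`. -/
def IsParse (X : Set (List A)) (w : List A) (p : List A × List A × List A) : Prop :=
  p.1 ++ p.2.1 ++ p.2.2 = w ∧ (¬ ∃ s ∈ X, s <:+ p.1) ∧ InStar X p.2.1 ∧
    ¬ ∃ s ∈ X, s <+: p.2.2

/-- `δ_X(w)`, the number of parses of `w` with respect to `X`. -/
noncomputable def delta (X : Set (List A)) (w : List A) : ℕ :=
  {p | IsParse X w p}.ncard

/-- The `F`-degree `d_F(X)` of `X`, as an extended natural number. -/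
noncomputable def Fdeg (X F : Set (List A)) : ℕ∞ :=
  ⨆ w ∈ F, (delta X w : ℕ∞)

/-- The degree `d(X)` of `X`. -/
noncomputable def deg (X : Set (List A)) : ℕ∞ := Fdeg X Set.univ

/-- An `F`-maximal bifix code. -/
def IsFMaximalBifixCode (F X : Set (List A)) : Prop :=
  IsBifixCode X ∧ X ⊆ F ∧ ∀ Y : Set (List A), IsBifixCode Y → Y ⊆ F → X ⊆ Y → Y = X

/-- An `F`-maximal prefix code. -/
def IsFMaximalPrefixCode (F X : Set (List A)) : Prop :=
  IsPrefixCode X ∧ X ⊆ F ∧ ∀ Y : Set (List A), IsPrefixCode Y → Y ⊆ F → X ⊆ Y → Y = X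

/-- `X` is `F`-thin: some word of `F` is not a factor of any element of `X`. -/
def FThin (F X : Set (List A)) : Prop := ∃ w ∈ F, ∀ x ∈ X, ¬ w <:+: x

/-- A rational (regular) language. -/
def IsRational (L : Set (List A)) : Prop :=
  ∃ (σ : Type) (_ : Fintype σ) (M : DFA A σ), ∀ w : List A, w ∈ M.accepts ↔ w ∈ L

/-- The syntactic congruence of the language `L`. -/
def SynEquiv (L : Set (List A)) (u v : List A) : Prop :=
  ∀ x y : List A, x ++ u ++ y ∈ L ↔ x ++ v ++ y ∈ L

/-- `η : A* → M` is (a realization of) the syntactic homomorphism onto the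
syntactic monoid of `L`. -/
structure IsSyntacticHom (L : Set (List A)) {M : Type*} [Monoid M] (η : List A → M) : Prop where
  map_nil : η [] = 1
  map_append : ∀ u v : List A, η (u ++ v) = η u * η v
  surj : Function.Surjective η
  syn : ∀ u v : List A, η u = η v ↔ SynEquiv L u v

section Green

variable {M : Type*} [Monoid M]

/-- The `J`-order: `MuM ⊆ MvM`. -/
def JLe (u v : M) : Prop := ∃ x y, u = x * v * y

/-- Green's relation `J`. -/
def JEquiv (u v : M) : Prop := JLe u v ∧ JLe v u

/-- Green's relation `R`. -/
def REquiv (u v : M) : Prop := (∃ x, v = u * x) ∧ (∃ x, u = v * x)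

/-- Green's relation `L`. -/
def LEquiv (u v : M) : Prop := (∃ x, v = x * u) ∧ (∃ x, u = x * v)

/-- Green's relation `H`. -/
def HEquiv (u v : M) : Prop := REquiv u v ∧ LEquiv u v

/-- Green's relation `D`. -/
def DEquiv (u v : M) : Prop := ∃ s, REquiv u s ∧ LEquiv s v

/-- The `H`-class of an element. -/
def HClass (e : M) : Set M := {m | HEquiv m e}

/-- Membership in the minimum ideal (minimum `J`-class) of `M`. -/
def InMinIdeal (m : M) : Prop := ∀ n : M, JLe m n

/-- `S` is a subgroup of the monoid `M`: a subsemigroup which is a group. -/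
def IsSubgroupIn (S : Set M) : Prop :=
  S.Nonempty ∧ (∀ x ∈ S, ∀ y ∈ S, x * y ∈ S) ∧
    ∃ e ∈ S, (∀ x ∈ S, e * x = x ∧ x * e = x) ∧ ∀ x ∈ S, ∃ y ∈ S, x * y = e ∧ y * x = e

/-- The subsets `S ⊆ M` and `T ⊆ N` (each closed under multiplication, e.g.
maximal subgroups) are isomorphic as groups: there is a multiplicative
bijection from `S` onto `T`. -/
def GroupIsoOn {N : Type*} [Monoid N] (S : Set M) (T : Set N) : Prop :=
  ∃ φ : M → N, Set.BijOn φ S T ∧ ∀ x ∈ S, ∀ y ∈ S, φ (x * y) = φ x * φ y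

end Green

/-- `m` belongs to `J_F(X)`, the minimum `J`-class of the syntactic monoid of
`X*` meeting the image of `F` under the syntactic homomorphism `η`. -/
def InFMinJ {M : Type*} [Monoid M] (η : List A → M) (F : Set (List A)) (m : M) : Prop :=
  (∃ w ∈ F, JEquiv m (η w)) ∧ ∀ w ∈ F, JLe m (η w)

/-- A group code: a prefix code `Z` defined by a transitive permutation
representation of `A*` on a finite set, `Z*` being the stabilizer of a point. -/
def IsGroupCode (Z : Set (List A)) : Prop :=
  IsPrefixCode Z ∧
  ∃ (Q : Type) (_ : Fintype Q) (q₀ : Q) (α : List A → Equiv.Perm Q),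
    α [] = 1 ∧ (∀ u v : List A, α (u ++ v) = α u * α v) ∧
    (∀ q q' : Q, ∃ w : List A, α w q = q') ∧
    (∀ w : List A, InStar Z w ↔ α w q₀ = q₀) ∧
    Z = {w : List A | α w q₀ = q₀ ∧ w ≠ [] ∧
          ¬ ∃ u v : List A, u ≠ [] ∧ v ≠ [] ∧ α u q₀ = q₀ ∧ α v q₀ = q₀ ∧ w = u ++ v}

/-- Vertices of the extension graph of `w` in `F`: the disjoint union of
`L(w)` and `R(w)`. -/
def ExtVertex (F : Set (List A)) (w : List A) : Sum A A → Prop :=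
  fun x => Sum.elim (fun a => a :: w ∈ F) (fun b => w ++ [b] ∈ F) x

/-- The edge relation of the extension graph of `w` in `F`. -/
def ExtRel (F : Set (List A)) (w : List A) : Sum A A → Sum A A → Prop :=
  fun x y =>
    match x, y with
    | Sum.inl a, Sum.inr b => a :: (w ++ [b]) ∈ F
    | _, _ => False

/-- The extension graph `G(w)` of `w` in `F`. -/
def extGraph (F : Set (List A)) (w : List A) :
    SimpleGraph {x : Sum A A // ExtVertex F w x} :=
  SimpleGraph.fromRel fun x y => ExtRel F w x.1 y.1

/-- `F` is connected: every extension graph of a word of `F` is connected. -/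
def ConnectedSet (F : Set (List A)) : Prop :=
  ∀ w ∈ F, (extGraph F w).Connected

/-- `F` is a tree set: every extension graph of a word of `F` is a tree. -/
def TreeSet (F : Set (List A)) : Prop :=
  ∀ w ∈ F, (extGraph F w).IsTree

/-- The alphabet of `F` is the whole of `A`. -/
def AlphabetIs (F : Set (List A)) : Prop := ∀ a : A, [a] ∈ F

/-- The left quotient `u⁻¹L`, i.e. the state reached from the initial state of
the minimal automaton of `L` by reading `u`. -/
def leftQuot (L : Set (List A)) (u : List A) : Set (List A) := {w | u ++ w ∈ L}

/-- The set of states of the minimal automaton of `L`: the nonempty left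
quotients of `L`. -/
def MinStates (L : Set (List A)) : Set (Set (List A)) :=
  {q | q.Nonempty ∧ ∃ u : List A, q = leftQuot L u}

/-- The (partial) transition of the minimal automaton: `q · v`; it is defined
when the resulting set is nonempty. -/
def stepW (q : Set (List A)) (v : List A) : Set (List A) := {w | v ++ w ∈ q}

/-- The rank of the word `v` in the minimal automaton of `L`: the number of
distinct states `q · v` with `q` a state such that `q · v` is defined. -/
noncomputable def wordRank (L : Set (List A)) (v : List A) : ℕ :=
  ((fun q => stepW q v) '' {q ∈ MinStates L | (stepW q v).Nonempty}).ncard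

/-- The set of first return words of `F` to `u`. -/
def ReturnWords (F : Set (List A)) (u : List A) : Set (List A) :=
  {v | v ≠ [] ∧ u ++ v ∈ F ∧ u <:+ u ++ v ∧
    ¬ ∃ x y : List A, x ≠ [] ∧ y ≠ [] ∧ u ++ v = x ++ u ++ y}

/-- A code: every word has at most one factorization into elements of `X`. -/
def IsCode (X : Set (List A)) : Prop :=
  ∀ l m : List (List A), (∀ u ∈ l, u ∈ X) → (∀ u ∈ m, u ∈ X) →
    l.flatten = m.flatten → l = m

/-- The set `I = Q_X · K` of images of states of the minimal automaton of `L`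
under (partial) transitions by words whose syntactic image lies in `K`. -/
def ImageSet (L : Set (List A)) {M : Type*} [Monoid M] (η : List A → M) (K : Set M) :
    Set (Set (List A)) :=
  {p | ∃ q ∈ MinStates L, ∃ v : List A, η v ∈ K ∧ (stepW q v).Nonempty ∧ p = stepW q v}

/-- A witness for "a finite monoid `M` together with a monoid homomorphism
`A* → M`". -/
structure FiniteMonoidHomWitness (A : Type*) where
  M : Type
  [fin : Fintype M]
  [mon : Monoid M]
  φ : List A → M
  map_nil : φ [] = 1
  map_append : ∀ u v : List A, φ (u ++ v) = φ u * φ v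

end PaperDefs

namespace S5
open PaperDefs

variable {A : Type*}

/-! ### Star basics -/

lemma star_nil (X : Set (List A)) : ([] : List A) ∈ star X := ⟨[], by simp, rfl⟩

lemma star_append {X : Set (List A)} {u v : List A} (hu : u ∈ star X) (hv : v ∈ star X) :
    u ++ v ∈ star X := by
  obtain ⟨l, hl, rfl⟩ := hu; obtain ⟨m, hm, rfl⟩ := hv
  refine ⟨l ++ m, ?_, by simp⟩
  intro x hx; rcases List.mem_append.1 hx with h | h
  exacts [hl x h, hm x h]

lemma mem_star_of_mem {X : Set (List A)} {x : List A} (hx : x ∈ X) : x ∈ star X :=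
  ⟨[x], by simpa using hx, by simp⟩

/-- Words with no prefix in `X`. -/
def NoXP (X : Set (List A)) (u : List A) : Prop := ¬ ∃ s ∈ X, s <+: u

/-- Words with no suffix in `X`. -/
def NoXS (X : Set (List A)) (v : List A) : Prop := ¬ ∃ s ∈ X, s <:+ v

lemma noXP_nil {X : Set (List A)} (hX : IsPrefixCode X) : NoXP X ([] : List A) := by
  rintro ⟨s, hs, hp⟩
  exact hX.2.1 s hs (List.prefix_nil.mp hp)

lemma noXS_nil {X : Set (List A)} (hX : IsSuffixCode X) : NoXS X ([] : List A) := by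
  rintro ⟨s, hs, hp⟩
  exact hX.2.1 s hs (List.suffix_nil.mp hp)

/-! ### Unique factorization for prefix codes -/

lemma blocks_unique {X : Set (List A)} (hX : IsPrefixCode X) :
    ∀ (la : List (List A)), (∀ b ∈ la, b ∈ X) →
    ∀ (lb : List (List A)), (∀ b ∈ lb, b ∈ X) →
    ∀ (u u' : List A), NoXP X u → NoXP X u' →
      la.flatten ++ u = lb.flatten ++ u' → la = lb ∧ u = u' := by
  intro la
  induction la with
  | nil =>
    intro _ lb hlb u u' hu hu' h
    cases lb with
    | nil => exact ⟨rfl, by simpa using h⟩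
    | cons y t =>
      exfalso
      apply hu
      refine ⟨y, hlb y (by simp), ?_⟩
      simp only [List.flatten_nil, List.nil_append, List.flatten_cons, List.append_assoc] at h
      exact h ▸ List.prefix_append y _
  | cons x ta ih =>
    intro hla lb hlb u u' hu hu' h
    cases lb with
    | nil =>
      exfalso
      apply hu'
      refine ⟨x, hla x (by simp), ?_⟩
      simp only [List.flatten_cons, List.flatten_nil, List.nil_append, List.append_assoc] at h
      exact h.symm ▸ List.prefix_append x _
    | cons y t =>
      have hx : x ∈ X := hla x (by simp)
      have hy : y ∈ X := hlb y (by simp)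
      simp only [List.flatten_cons, List.append_assoc] at h
      have hxw : x <+: x ++ (ta.flatten ++ u) := List.prefix_append _ _
      have hyw : y <+: x ++ (ta.flatten ++ u) := h ▸ List.prefix_append y _
      have hxy : x = y := by
        rcases List.prefix_or_prefix_of_prefix hxw hyw with h' | h'
        · exact hX.2.2 x hx y hy h'
        · exact (hX.2.2 y hy x hx h').symm
      subst hxy
      have h2 : ta.flatten ++ u = t.flatten ++ u' := List.append_cancel_left h
      obtain ⟨h3, h4⟩ := ih (fun b hb => hla b (by simp [hb])) t
        (fun b hb => hlb b (by simp [hb])) u u' hu hu' h2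
      exact ⟨by rw [h3], h4⟩

lemma greedy_prefix {X : Set (List A)} (hX : IsPrefixCode X) (z : List A) :
    ∃ (l : List (List A)) (u : List A), (∀ b ∈ l, b ∈ X) ∧ NoXP X u ∧ z = l.flatten ++ u := by
  have H : ∀ n (z : List A), z.length ≤ n →
      ∃ (l : List (List A)) (u : List A), (∀ b ∈ l, b ∈ X) ∧ NoXP X u ∧ z = l.flatten ++ u := by
    intro n
    induction n with
    | zero =>
      intro z hz
      have : z = [] := List.eq_nil_of_length_eq_zero (Nat.le_zero.1 hz)
      subst this
      exact ⟨[], [], by simp, noXP_nil hX, by simp⟩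
    | succ n ih =>
      intro z hz
      by_cases hc : ∃ s ∈ X, s <+: z
      · obtain ⟨s, hs, t, rfl⟩ := hc
        have hslen : 0 < s.length := List.length_pos_iff.mpr (hX.2.1 s hs)
        have : t.length ≤ n := by
          simp only [List.length_append] at hz; omega
        obtain ⟨l, u, h1, h2, h3⟩ := ih t this
        refine ⟨s :: l, u, ?_, h2, by simp [h3]⟩
        rintro b hb
        rcases List.mem_cons.1 hb with rfl | hb
        exacts [hs, h1 b hb]
      · exact ⟨[], z, by simp, hc, by simp⟩
  exact H z.length z le_rfl

lemma right_unitary {X : Set (List A)} (hX : IsPrefixCode X) {a b : List A}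
    (ha : a ∈ star X) (hab : a ++ b ∈ star X) : b ∈ star X := by
  obtain ⟨la, hla, hfa⟩ := ha
  obtain ⟨l, hl, hf⟩ := hab
  obtain ⟨lb, u, h1, h2, h3⟩ := greedy_prefix hX b
  have key : (la ++ lb).flatten ++ u = l.flatten ++ [] := by
    simp only [List.flatten_append, List.append_nil, List.append_assoc]
    rw [hfa, hf, h3]
  obtain ⟨-, h5⟩ := blocks_unique hX (la ++ lb)
    (by intro x hx; rcases List.mem_append.1 hx with h | h; exacts [hla x h, h1 x h])
    l hl u [] h2 (noXP_nil hX) key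
  subst h5
  rw [h3, List.append_nil]
  exact ⟨lb, h1, rfl⟩

lemma first_block {X : Set (List A)} {z : List A} (hz : z ∈ star X) (hne : z ≠ []) :
    ∃ x ∈ X, ∃ z', z = x ++ z' ∧ z' ∈ star X := by
  obtain ⟨l, hl, rfl⟩ := hz
  cases l with
  | nil => simp at hne
  | cons b t =>
    exact ⟨b, hl b (by simp), t.flatten, by simp, ⟨t, fun x hx => hl x (by simp [hx]), rfl⟩⟩

lemma split_blocks {X : Set (List A)} :
    ∀ (l : List (List A)), (∀ b ∈ l, b ∈ X) → ∀ (a b : List A), l.flatten = a ++ b →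
    (∃ l₁ l₂ : List (List A), l = l₁ ++ l₂ ∧ l₁.flatten = a) ∨
    (∃ (l₁ : List (List A)) (z : List A) (l₂ : List (List A)) (z₁ z₂ : List A),
      l = l₁ ++ z :: l₂ ∧ z = z₁ ++ z₂ ∧ z₁ ≠ [] ∧ z₂ ≠ [] ∧ l₁.flatten ++ z₁ = a) := by
  intro l
  induction l with
  | nil =>
    intro _ a b h
    left
    refine ⟨[], [], rfl, ?_⟩
    simp only [List.flatten_nil] at h ⊢
    exact (List.append_eq_nil_iff.1 h.symm).1.symm
  | cons z t ih =>
    intro hb a b h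
    simp only [List.flatten_cons, List.append_assoc] at h
    rcases le_or_gt a.length z.length with hle | hlt
    · -- a is a prefix of z
      have haz : a <+: z := by
        apply List.prefix_of_prefix_length_le _ (List.prefix_append z t.flatten) hle
        · rw [h]; exact List.prefix_append _ _
      obtain ⟨z₂, rfl⟩ := haz
      by_cases hz2 : z₂ = []
      · subst hz2
        left
        exact ⟨[a ++ []], t, by simp, by simp⟩
      · by_cases ha : a = []
        · subst ha
          left
          exact ⟨[], (([] : List A) ++ z₂) :: t, rfl, rfl⟩
        · right
          exact ⟨[], a ++ z₂, t, a, z₂, rfl, rfl, ha, hz2, by simp⟩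
    · -- z is a proper prefix of a
      have hza : z <+: a := by
        apply List.prefix_of_prefix_length_le (List.prefix_append z t.flatten) _ (Nat.le_of_lt hlt)
        · rw [h]; exact List.prefix_append _ _
      obtain ⟨a', rfl⟩ := hza
      have h2 : t.flatten = a' ++ b := by
        rw [List.append_assoc] at h
        exact List.append_cancel_left h
      rcases ih (fun c hc => hb c (by simp [hc])) a' b h2 with h' | h'
      · obtain ⟨l₁, l₂, rfl, hf⟩ := h'
        left
        exact ⟨z :: l₁, l₂, rfl, by simp [hf]⟩
      · obtain ⟨l₁, z', l₂, z₁, z₂, rfl, hzz, h1, h2', h3⟩ := h'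
        right
        exact ⟨z :: l₁, z', l₂, z₁, z₂, rfl, hzz, h1, h2', by simp [h3, List.append_assoc]⟩

end S5

namespace S5
open PaperDefs

variable {A : Type*}

/-! ### Reversal toolkit -/

/-- The reversed code. -/
def rv (X : Set (List A)) : Set (List A) := List.reverse '' X

lemma mem_rv {X : Set (List A)} {u : List A} : u ∈ rv X ↔ u.reverse ∈ X := by
  constructor
  · rintro ⟨v, hv, rfl⟩; simpa
  · intro h; exact ⟨u.reverse, h, by simp⟩

lemma rv_prefixCode {X : Set (List A)} (hX : IsSuffixCode X) : IsPrefixCode (rv X) := by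
  obtain ⟨⟨x, hx⟩, hne, hcode⟩ := hX
  refine ⟨⟨x.reverse, mem_rv.2 (by simpa)⟩, ?_, ?_⟩
  · intro w hw h
    exact hne _ (mem_rv.1 hw) (by simp [h])
  · intro u hu v hv hp
    have h2 : u.reverse <:+ v.reverse := List.reverse_suffix.mpr hp
    have := hcode _ (mem_rv.1 hu) _ (mem_rv.1 hv) h2
    exact List.reverse_injective this

lemma star_rv {X : Set (List A)} {w : List A} : w ∈ star (rv X) ↔ w.reverse ∈ star X := by
  constructor
  · rintro ⟨l, hl, rfl⟩
    refine ⟨(l.map List.reverse).reverse, ?_, ?_⟩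
    · intro b hb
      simp only [List.mem_reverse, List.mem_map] at hb
      obtain ⟨c, hc, rfl⟩ := hb
      exact mem_rv.1 (hl c hc)
    · exact List.reverse_flatten.symm
  · intro h
    obtain ⟨l, hl, hf⟩ := h
    refine ⟨(l.map List.reverse).reverse, ?_, ?_⟩
    · intro b hb
      simp only [List.mem_reverse, List.mem_map] at hb
      obtain ⟨c, hc, rfl⟩ := hb
      exact mem_rv.2 (by simpa using hl c hc)
    · rw [← List.reverse_flatten, hf, List.reverse_reverse]

lemma star_reverse {X : Set (List A)} {w : List A} (h : w ∈ star X) :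
    w.reverse ∈ star (rv X) := by
  rw [star_rv, List.reverse_reverse]; exact h

lemma noXP_rv {X : Set (List A)} {v : List A} (h : NoXS X v) : NoXP (rv X) v.reverse := by
  rintro ⟨s, hs, hp⟩
  refine h ⟨s.reverse, mem_rv.1 hs, ?_⟩
  have := List.reverse_suffix.mpr hp
  simpa using this

/-! ### Dual lemmas for suffix codes -/

lemma greedy_suffix {X : Set (List A)} (hX : IsSuffixCode X) (z : List A) :
    ∃ (v : List A) (l : List (List A)), NoXS X v ∧ (l.flatten ∈ star X) ∧ z = v ++ l.flatten := by
  obtain ⟨l, u, h1, h2, h3⟩ := greedy_prefix (rv_prefixCode hX) z.reverse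
  refine ⟨u.reverse, (l.map List.reverse).reverse, ?_, ?_, ?_⟩
  · rintro ⟨s, hs, hp⟩
    refine h2 ⟨s.reverse, mem_rv.2 (by simpa), ?_⟩
    simpa using List.reverse_prefix.mpr hp
  · refine ⟨(l.map List.reverse).reverse, fun b hb => ?_, rfl⟩
    simp only [List.mem_reverse, List.mem_map] at hb
    obtain ⟨c, hc, rfl⟩ := hb
    exact mem_rv.1 (h1 c hc)
  · have := congrArg List.reverse h3
    simp only [List.reverse_reverse, List.reverse_append] at this
    rw [this, List.reverse_flatten]

/-- Uniqueness of the suffix-greedy factorization. -/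
lemma blocks_unique_s {X : Set (List A)} (hX : IsSuffixCode X) {v v' a a' : List A}
    (ha : a ∈ star X) (ha' : a' ∈ star X) (hv : NoXS X v) (hv' : NoXS X v')
    (h : v ++ a = v' ++ a') : v = v' ∧ a = a' := by
  obtain ⟨la, hla, rfl⟩ := ha
  obtain ⟨lb, hlb, rfl⟩ := ha'
  have h2 : ((la.map List.reverse).reverse).flatten ++ v.reverse
      = ((lb.map List.reverse).reverse).flatten ++ v'.reverse := by
    rw [← List.reverse_flatten, ← List.reverse_flatten, ← List.reverse_append,
      ← List.reverse_append, h]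
  have hmem : ∀ (l : List (List A)), (∀ b ∈ l, b ∈ X) →
      ∀ b ∈ (l.map List.reverse).reverse, b ∈ rv X := by
    intro l hl b hb
    simp only [List.mem_reverse, List.mem_map] at hb
    obtain ⟨c, hc, rfl⟩ := hb
    exact mem_rv.2 (by simpa using hl c hc)
  obtain ⟨h3, h4⟩ := blocks_unique (rv_prefixCode hX) _ (hmem la hla) _ (hmem lb hlb)
    _ _ (noXP_rv hv) (noXP_rv hv') h2
  have hvv : v = v' := List.reverse_injective h4
  subst hvv
  exact ⟨rfl, List.append_cancel_left h⟩

lemma left_unitary {X : Set (List A)} (hX : IsSuffixCode X) {a b : List A}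
    (hb : b ∈ star X) (hab : a ++ b ∈ star X) : a ∈ star X := by
  have h1 : b.reverse ∈ star (rv X) := star_reverse hb
  have h2 : b.reverse ++ a.reverse ∈ star (rv X) := by
    have := star_reverse hab
    simpa using this
  have := right_unitary (rv_prefixCode hX) h1 h2
  rw [star_rv] at this
  simpa using this

lemma last_block {X : Set (List A)} (hX : IsSuffixCode X) {z : List A}
    (hz : z ∈ star X) (hne : z ≠ []) : ∃ x ∈ X, x <:+ z := by
  obtain ⟨x, hx, z', hz', -⟩ := first_block (X := rv X) (star_reverse hz) (by simpa)
  refine ⟨x.reverse, mem_rv.1 hx, ?_⟩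
  have h1 : x <+: z.reverse := ⟨z', hz'.symm⟩
  have h2 := List.reverse_suffix.mpr h1
  simpa using h2

lemma first_block_prefix {X : Set (List A)} {z : List A}
    (hz : z ∈ star X) (hne : z ≠ []) : ∃ x ∈ X, x <+: z := by
  obtain ⟨x, hx, z', hz', -⟩ := first_block hz hne
  exact ⟨x, hx, ⟨z', hz'.symm⟩⟩

end S5

namespace S5
open PaperDefs

variable {A : Type*}

/-! ### Parses -/

/-- The set of parses. -/
def pSet (X : Set (List A)) (w : List A) : Set (List A × List A × List A) := {p | IsParse X w p}

/-- Prefixes with no suffix in `X`. -/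
def preS (X : Set (List A)) (w : List A) : Set (List A) := {v | v <+: w ∧ NoXS X v}

/-- Suffixes with no prefix in `X`. -/
def sufS (X : Set (List A)) (w : List A) : Set (List A) := {u | u <:+ w ∧ NoXP X u}

lemma preS_finite (X : Set (List A)) (w : List A) : (preS X w).Finite := by
  apply Set.Finite.subset w.inits.finite_toSet
  intro v hv
  simpa [List.mem_inits] using hv.1

lemma sufS_finite (X : Set (List A)) (w : List A) : (sufS X w).Finite := by
  apply Set.Finite.subset w.tails.finite_toSet
  intro v hv
  simpa [List.mem_tails] using hv.1

lemma pSet_fst_injOn {X : Set (List A)} (hX : IsPrefixCode X) (w : List A) :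
    Set.InjOn (fun p => p.1) (pSet X w) := by
  rintro ⟨v, x, u⟩ ⟨h1, h2, h3, h4⟩ ⟨v', x', u'⟩ ⟨h1', h2', h3', h4'⟩ he
  simp only at he
  subst he
  obtain ⟨lx, hlx, rfl⟩ := h3
  obtain ⟨lx', hlx', rfl⟩ := h3'
  have heq : lx.flatten ++ u = lx'.flatten ++ u' := by
    have := h1.trans h1'.symm
    simp only [List.append_assoc] at this
    exact List.append_cancel_left this
  obtain ⟨hl, hu⟩ := blocks_unique hX lx hlx lx' hlx' u u' h4 h4' heq
  rw [hl, hu]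

lemma pSet_snd_injOn {X : Set (List A)} (hX : IsSuffixCode X) (w : List A) :
    Set.InjOn (fun p => p.2.2) (pSet X w) := by
  rintro ⟨v, x, u⟩ ⟨h1, h2, h3, h4⟩ ⟨v', x', u'⟩ ⟨h1', h2', h3', h4'⟩ he
  simp only at he
  subst he
  have heq : v ++ x = v' ++ x' := by
    have := h1.trans h1'.symm
    exact List.append_cancel_right (by simpa [List.append_assoc] using this)
  obtain ⟨hv, hx⟩ := blocks_unique_s hX (by obtain ⟨l,hl,rfl⟩ := h3; exact ⟨l,hl,rfl⟩)
    (by obtain ⟨l,hl,rfl⟩ := h3'; exact ⟨l,hl,rfl⟩) h2 h2' heq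
  simp only at hv hx
  rw [hv, hx]

lemma pSet_fst_image {X : Set (List A)} (hX : IsPrefixCode X) (w : List A) :
    (fun p => p.1) '' pSet X w = preS X w := by
  ext v
  constructor
  · rintro ⟨⟨v', x, u⟩, ⟨h1, h2, h3, h4⟩, rfl⟩
    exact ⟨⟨x ++ u, by simpa [List.append_assoc] using h1⟩, h2⟩
  · rintro ⟨⟨rest, rfl⟩, h2⟩
    obtain ⟨l, u, hl, hu, rfl⟩ := greedy_prefix hX rest
    exact ⟨⟨v, l.flatten, u⟩, ⟨by simp [List.append_assoc], h2, ⟨l, hl, rfl⟩, hu⟩, rfl⟩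

lemma pSet_snd_image {X : Set (List A)} (hX : IsSuffixCode X) (w : List A) :
    (fun p => p.2.2) '' pSet X w = sufS X w := by
  ext u
  constructor
  · rintro ⟨⟨v, x, u'⟩, ⟨h1, h2, h3, h4⟩, rfl⟩
    exact ⟨⟨v ++ x, by simpa [List.append_assoc] using h1⟩, h4⟩
  · rintro ⟨⟨rest, rfl⟩, h2⟩
    obtain ⟨v, l, hv, hl, rfl⟩ := greedy_suffix hX rest
    refine ⟨⟨v, l.flatten, u⟩, ⟨by simp [List.append_assoc], hv, hl, h2⟩, rfl⟩

lemma delta_eq_preS {X : Set (List A)} (hX : IsPrefixCode X) (w : List A) :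
    delta X w = (preS X w).ncard := by
  unfold delta
  rw [← pSet_fst_image hX w, Set.ncard_image_of_injOn (pSet_fst_injOn hX w)]
  rfl

lemma delta_eq_sufS {X : Set (List A)} (hX : IsSuffixCode X) (w : List A) :
    delta X w = (sufS X w).ncard := by
  unfold delta
  rw [← pSet_snd_image hX w, Set.ncard_image_of_injOn (pSet_snd_injOn hX w)]
  rfl

lemma pSet_finite {X : Set (List A)} (hX : IsPrefixCode X) (w : List A) :
    (pSet X w).Finite := by
  have h := preS_finite X w
  rw [← pSet_fst_image hX w] at h
  exact h.of_finite_image (pSet_fst_injOn hX w)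

/-! ### Monotonicity of the number of parses -/

lemma delta_mono {X : Set (List A)} (hX : IsBifixCode X) {w W : List A} (h : w <:+: W) :
    delta X w ≤ delta X W := by
  obtain ⟨a, b, rfl⟩ := h
  have step1 : delta X w ≤ delta X (w ++ b) := by
    rw [delta_eq_preS hX.1, delta_eq_preS hX.1]
    apply Set.ncard_le_ncard _ (preS_finite _ _)
    rintro v ⟨hv, h2⟩
    exact ⟨hv.trans (List.prefix_append _ _), h2⟩
  have step2 : delta X (w ++ b) ≤ delta X (a ++ (w ++ b)) := by
    rw [delta_eq_sufS hX.2, delta_eq_sufS hX.2]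
    apply Set.ncard_le_ncard _ (sufS_finite _ _)
    rintro u ⟨hu, h2⟩
    exact ⟨hu.trans (List.suffix_append _ _), h2⟩
  calc delta X w ≤ delta X (w ++ b) := step1
    _ ≤ delta X (a ++ (w ++ b)) := step2
    _ = delta X (a ++ w ++ b) := by rw [List.append_assoc]

end S5

namespace S5
open PaperDefs

variable {A : Type*}

/-- `w` can be completed on the left to a word of `X*`. -/
def LeftC (X : Set (List A)) (w : List A) : Prop := ∃ y, y ++ w ∈ star X

/-- `w` can be completed on the right to a word of `X*`. -/
def RightC (X : Set (List A)) (w : List A) : Prop := ∃ z, w ++ z ∈ star X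

/-- Key lemma: in a recurrent set `F`, no word is simultaneously non-completable on
the left and on the right with respect to an `F`-maximal bifix code. -/
lemma no_bothdead {F X : Set (List A)} (hF : Recurrent F) (hX : IsFMaximalBifixCode F X)
    {u : List A} (hu : u ∈ F) (hL : ¬ LeftC X u) (hR : ¬ RightC X u) : False := by
  obtain ⟨⟨hXp, hXs⟩, hXF, hmax⟩ := hX
  have hune : u ≠ [] := by
    rintro rfl
    exact hR ⟨[], star_nil X⟩
  obtain ⟨w₁, h1⟩ := hF.2.2.2 u hu u hu
  obtain ⟨w₂, h2⟩ := hF.2.2.2 u hu _ h1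
  set c₀ : List A := u ++ w₂ ++ u ++ w₁ ++ u with hc₀
  have hc₀F : c₀ ∈ F := by simpa [hc₀, List.append_assoc] using h2
  -- strip maximal X*-suffix
  obtain ⟨c₁, ly, hc₁S, hYstar, hc₀split⟩ := greedy_suffix hXs c₀
  set Y : List A := ly.flatten with hYdef
  -- the stripped suffix is shorter than u
  have hYu : Y.length < u.length := by
    by_contra hge
    push_neg at hge
    have hY : Y <:+ c₀ := ⟨c₁, hc₀split.symm⟩
    have hu' : u <:+ c₀ := ⟨u ++ w₂ ++ u ++ w₁, rfl⟩
    obtain ⟨ρ, hρ⟩ := List.suffix_of_suffix_length_le hu' hY hge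
    exact hL ⟨ρ, hρ.symm ▸ hYstar⟩
  have hYsuf : Y <:+ u := by
    have hY : Y <:+ c₀ := ⟨c₁, hc₀split.symm⟩
    have hu' : u <:+ c₀ := ⟨u ++ w₂ ++ u ++ w₁, rfl⟩
    exact List.suffix_of_suffix_length_le hY hu' (Nat.le_of_lt hYu)
  obtain ⟨u'', hu''⟩ := hYsuf
  have hc₁ : c₁ = u ++ w₂ ++ u ++ w₁ ++ u'' := by
    apply List.append_cancel_right (bs := Y)
    rw [← hc₀split, hc₀, ← hu'']
    simp [List.append_assoc]
  -- strip maximal X*-prefix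
  obtain ⟨lz, c₂, hlz, hc₂P, hc₁split⟩ := greedy_prefix hXp c₁
  set Z : List A := lz.flatten with hZdef
  have hZstar : Z ∈ star X := ⟨lz, hlz, rfl⟩
  have hZu : Z.length < u.length := by
    by_contra hge
    push_neg at hge
    have hZ : Z <+: c₁ := ⟨c₂, hc₁split.symm⟩
    have hu' : u <+: c₁ := ⟨w₂ ++ u ++ w₁ ++ u'', by rw [hc₁]; simp [List.append_assoc]⟩
    obtain ⟨ρ, hρ⟩ := List.prefix_of_prefix_length_le hu' hZ hge
    exact hR ⟨ρ, hρ.symm ▸ hZstar⟩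
  have hZpre : Z <+: u := by
    have hZ : Z <+: c₁ := ⟨c₂, hc₁split.symm⟩
    have hu' : u <+: c₁ := ⟨w₂ ++ u ++ w₁ ++ u'', by rw [hc₁]; simp [List.append_assoc]⟩
    exact List.prefix_of_prefix_length_le hZ hu' (Nat.le_of_lt hZu)
  obtain ⟨uh, huh⟩ := hZpre
  have hc₂ : c₂ = uh ++ w₂ ++ u ++ w₁ ++ u'' := by
    apply List.append_cancel_left (as := Z)
    rw [← hc₁split, hc₁, ← huh]
    simp [List.append_assoc]
  -- candidate properties
  have propC : ∀ x ∈ X, ¬ (c₂ <+: x) := by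
    rintro x hx ⟨d, hd⟩
    apply hR
    refine ⟨w₂ ++ u ++ w₁ ++ u'' ++ d, ?_⟩
    have hZx : Z ++ x ∈ star X := star_append hZstar (mem_star_of_mem hx)
    have he : Z ++ x = u ++ (w₂ ++ u ++ w₁ ++ u'' ++ d) := by
      rw [← hd, hc₂, ← huh]
      simp [List.append_assoc]
    rwa [he] at hZx
  have propD : ∀ x ∈ X, ¬ (c₂ <:+ x) := by
    rintro x hx ⟨ρ, hρ⟩
    apply hL
    refine ⟨ρ ++ uh ++ w₂ ++ u ++ w₁, ?_⟩
    have hxY : x ++ Y ∈ star X := star_append (mem_star_of_mem hx) hYstar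
    have he : x ++ Y = ρ ++ uh ++ w₂ ++ u ++ w₁ ++ u := by
      rw [← hρ, hc₂, ← hu'']
      simp [List.append_assoc]
    rwa [he] at hxY
  have propB : NoXS X c₂ := by
    rintro ⟨s, hs, hsuf⟩
    exact hc₁S ⟨s, hs, hsuf.trans ⟨Z, hc₁split.symm⟩⟩
  have hc₂ne : c₂ ≠ [] := by
    intro h
    apply hune
    have hlen := congrArg List.length h
    rw [hc₂] at hlen
    simp only [List.length_append, List.length_nil] at hlen
    exact List.eq_nil_of_length_eq_zero (by omega)
  have hc₂F : c₂ ∈ F := by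
    apply hF.1 c₀ hc₀F
    refine ⟨Z, Y, ?_⟩
    rw [← hc₁split, ← hc₀split]
  -- the extended code
  have hbifix : IsBifixCode (insert c₂ X) := by
    constructor
    · refine ⟨⟨c₂, Set.mem_insert _ _⟩, ?_, ?_⟩
      · rintro w hw
        rcases Set.mem_insert_iff.1 hw with rfl | hw
        · exact hc₂ne
        · exact hXp.2.1 w hw
      · rintro a ha b hb hab
        rcases Set.mem_insert_iff.1 ha with ha' | ha' <;>
          rcases Set.mem_insert_iff.1 hb with hb' | hb'
        · rw [ha', hb']
        · exact absurd (ha' ▸ hab) (propC b hb')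
        · exact absurd ⟨a, ha', hb' ▸ hab⟩ hc₂P
        · exact hXp.2.2 a ha' b hb' hab
    · refine ⟨⟨c₂, Set.mem_insert _ _⟩, ?_, ?_⟩
      · rintro w hw
        rcases Set.mem_insert_iff.1 hw with rfl | hw
        · exact hc₂ne
        · exact hXs.2.1 w hw
      · rintro a ha b hb hab
        rcases Set.mem_insert_iff.1 ha with ha' | ha' <;>
          rcases Set.mem_insert_iff.1 hb with hb' | hb'
        · rw [ha', hb']
        · exact absurd (ha' ▸ hab) (propD b hb')
        · exact absurd ⟨a, ha', hb' ▸ hab⟩ propB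
        · exact hXs.2.2 a ha' b hb' hab
  have heq : insert c₂ X = X :=
    hmax _ hbifix (Set.insert_subset hc₂F hXF) (Set.subset_insert _ _)
  have : c₂ ∈ X := heq ▸ Set.mem_insert _ _
  exact propB ⟨c₂, this, List.suffix_refl c₂⟩

lemma leftdead_rightalive {F X : Set (List A)} (hF : Recurrent F)
    (hX : IsFMaximalBifixCode F X) {v u : List A} (hv : v ∈ F) (hu : u ∈ F)
    (hL : ¬ LeftC X v) : RightC X u := by
  by_contra hR
  obtain ⟨τ, hτ⟩ := hF.2.2.2 u hu v hv
  refine no_bothdead hF hX hτ ?_ ?_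
  · rintro ⟨y, hy⟩
    exact hL ⟨y ++ u ++ τ, by simpa [List.append_assoc] using hy⟩
  · rintro ⟨z, hz⟩
    exact hR ⟨τ ++ v ++ z, by simpa [List.append_assoc] using hz⟩

end S5

namespace S5
open PaperDefs

variable {A : Type*} {M : Type*} [Monoid M]

/-! ### The syntactic monoid of `X*` -/

/-- The image of `X*` in the syntactic monoid. -/
def img (η : List A → M) (X : Set (List A)) : Set M := η '' star X

lemma mem_img {X : Set (List A)} {η : List A → M} (hη : IsSyntacticHom (star X) η)
    (w : List A) : η w ∈ img η X ↔ w ∈ star X := by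
  constructor
  · rintro ⟨w', hw', he⟩
    have h2 := ((hη.syn w' w).1 he [] []).1 (by simpa using hw')
    simpa using h2
  · intro h; exact ⟨w, h, rfl⟩

/-- The row of `m`. -/
def rowm (η : List A → M) (X : Set (List A)) (m : M) : Set M := {n | m * n ∈ img η X}

/-- The column of `m`. -/
def colm (η : List A → M) (X : Set (List A)) (m : M) : Set M := {n | n * m ∈ img η X}

lemma row_words {X : Set (List A)} {η : List A → M} (hη : IsSyntacticHom (star X) η)
    (u z : List A) : η z ∈ rowm η X (η u) ↔ u ++ z ∈ star X := by
  rw [rowm, Set.mem_setOf_eq, ← hη.map_append, mem_img hη]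

lemma col_words {X : Set (List A)} {η : List A → M} (hη : IsSyntacticHom (star X) η)
    (v y : List A) : η y ∈ colm η X (η v) ↔ y ++ v ∈ star X := by
  rw [colm, Set.mem_setOf_eq, ← hη.map_append, mem_img hη]

/-! ### Injectivity of rows/columns on parses -/

lemma col_inj_preS {X : Set (List A)} (hXp : IsPrefixCode X) (hXs : IsSuffixCode X)
    {η : List A → M} (hη : IsSyntacticHom (star X) η) {W v v' : List A}
    (hv : v ∈ preS X W) (hv' : v' ∈ preS X W) (hy : LeftC X v)
    (he : colm η X (η v) = colm η X (η v')) : v = v' := by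
  obtain ⟨y, hyv⟩ := hy
  have hyv' : y ++ v' ∈ star X := by
    rw [← col_words hη] at hyv ⊢
    exact he ▸ hyv
  have aux : ∀ a b : List A, b ∈ preS X W → y ++ a ∈ star X → y ++ b ∈ star X →
      a <+: b → a = b := by
    rintro a b hb ha hab ⟨s, rfl⟩
    rcases eq_or_ne s [] with rfl | hs
    · simp
    · exfalso
      have : s ∈ star X := by
        apply right_unitary hXp ha
        rwa [← List.append_assoc] at hab
      obtain ⟨x, hx, hsuf⟩ := last_block hXs this hs
      exact hb.2 ⟨x, hx, hsuf.trans (List.suffix_append a s)⟩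
  rcases List.prefix_or_prefix_of_prefix hv.1 hv'.1 with h | h
  · exact aux v v' hv' hyv hyv' h
  · exact (aux v' v hv hyv' hyv h).symm

lemma row_inj_sufS {X : Set (List A)} (hXp : IsPrefixCode X) (hXs : IsSuffixCode X)
    {η : List A → M} (hη : IsSyntacticHom (star X) η) {W u u' : List A}
    (hu : u ∈ sufS X W) (hu' : u' ∈ sufS X W) (hz : RightC X u)
    (he : rowm η X (η u) = rowm η X (η u')) : u = u' := by
  obtain ⟨z, hzu⟩ := hz
  have hzu' : u' ++ z ∈ star X := by
    rw [← row_words hη] at hzu ⊢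
    exact he ▸ hzu
  have aux : ∀ a b : List A, b ∈ sufS X W → a ++ z ∈ star X → b ++ z ∈ star X →
      a <:+ b → a = b := by
    rintro a b hb ha hab ⟨r, rfl⟩
    rcases eq_or_ne r [] with rfl | hr
    · simp
    · exfalso
      have : r ∈ star X := by
        apply left_unitary hXs ha
        rwa [List.append_assoc] at hab
      obtain ⟨x, hx, hpre⟩ := first_block_prefix this hr
      exact hb.2 ⟨x, hx, hpre.trans (List.prefix_append r a)⟩
  rcases List.suffix_or_suffix_of_suffix hu.1 hu'.1 with h | h
  · exact aux u u' hu' hzu hzu' h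
  · exact (aux u' u hu hzu' hzu h).symm

/-! ### Boundedness of the number of parses -/

lemma delta_le_card [Finite M] {F X : Set (List A)} (hF : Recurrent F)
    (hX : IsFMaximalBifixCode F X) {η : List A → M} (hη : IsSyntacticHom (star X) η)
    {W : List A} (hW : W ∈ F) : delta X W ≤ Nat.card (Set M × Set M) := by
  classical
  obtain ⟨⟨hXp, hXs⟩, hXF, hmax⟩ := hX
  have hinj : Set.InjOn (fun p => (colm η X (η p.1), rowm η X (η p.2.2))) (pSet X W) := by
    rintro p hp q hq he
    simp only [Prod.mk.injEq] at he
    have hpv : p.1 ∈ preS X W := by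
      obtain ⟨h1, h2, h3, h4⟩ := hp
      exact ⟨⟨p.2.1 ++ p.2.2, by simpa [List.append_assoc] using h1⟩, h2⟩
    have hqv : q.1 ∈ preS X W := by
      obtain ⟨h1, h2, h3, h4⟩ := hq
      exact ⟨⟨q.2.1 ++ q.2.2, by simpa [List.append_assoc] using h1⟩, h2⟩
    have hpu : p.2.2 ∈ sufS X W := by
      obtain ⟨h1, h2, h3, h4⟩ := hp
      exact ⟨⟨p.1 ++ p.2.1, by simpa [List.append_assoc] using h1⟩, h4⟩
    have hqu : q.2.2 ∈ sufS X W := by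
      obtain ⟨h1, h2, h3, h4⟩ := hq
      exact ⟨⟨q.1 ++ q.2.1, by simpa [List.append_assoc] using h1⟩, h4⟩
    by_cases hy : LeftC X p.1
    · exact pSet_fst_injOn hXp W hp hq
        (col_inj_preS hXp hXs hη hpv hqv hy he.1)
    · have hvF : p.1 ∈ F := hF.1 W hW _ hpv.1.isInfix
      have huF : p.2.2 ∈ F := hF.1 W hW _ hpu.1.isInfix
      have hz : RightC X p.2.2 :=
        leftdead_rightalive hF ⟨⟨hXp, hXs⟩, hXF, hmax⟩ hvF huF hy
      exact pSet_snd_injOn hXs W hp hq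
        (row_inj_sufS hXp hXs hη hpu hqu hz he.2)
  calc delta X W = (pSet X W).ncard := rfl
    _ = ((fun p => (colm η X (η p.1), rowm η X (η p.2.2))) '' pSet X W).ncard :=
        (Set.ncard_image_of_injOn hinj).symm
    _ ≤ (Set.univ : Set (Set M × Set M)).ncard :=
        Set.ncard_le_ncard (Set.subset_univ _) Set.finite_univ
    _ = Nat.card (Set M × Set M) := Set.ncard_univ _

/-! ### A word of maximal parse number, and completability -/

lemma exists_max_delta [Finite M] {F X : Set (List A)} (hF : Recurrent F)
    (hX : IsFMaximalBifixCode F X) {η : List A → M} (hη : IsSyntacticHom (star X) η) :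
    ∃ W₀ ∈ F, ∀ w ∈ F, delta X w ≤ delta X W₀ := by
  set s : Set ℕ := {n | ∃ w ∈ F, delta X w = n} with hs
  have hne : s.Nonempty := by
    obtain ⟨w, hw⟩ := hF.2.1
    exact ⟨delta X w, w, hw, rfl⟩
  have hbdd : BddAbove s := by
    refine ⟨Nat.card (Set M × Set M), ?_⟩
    rintro n ⟨w, hw, rfl⟩
    exact delta_le_card hF hX hη hw
  obtain ⟨W₀, hW₀, hty⟩ := Nat.sSup_mem hne hbdd
  exact ⟨W₀, hW₀, fun w hw => hty ▸ le_csSup hbdd ⟨w, hw, rfl⟩⟩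

lemma leftC_all [Finite M] {F X : Set (List A)} (hF : Recurrent F)
    (hX : IsFMaximalBifixCode F X) {η : List A → M} (hη : IsSyntacticHom (star X) η) :
    ∀ w ∈ F, LeftC X w := by
  obtain ⟨W₀, hW₀F, hmaxδ⟩ := exists_max_delta hF hX hη
  have hXp := hX.1.1
  have hXs := hX.1.2
  have H : ∀ n, ∀ w, w ∈ F → w.length ≤ n → LeftC X w := by
    intro n
    induction n with
    | zero =>
      intro w _ hlen
      have : w = [] := List.eq_nil_of_length_eq_zero (Nat.le_zero.1 hlen)
      exact ⟨[], by simpa [this] using star_nil X⟩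
    | succ n ih =>
      intro w hw hlen
      rcases eq_or_ne w [] with rfl | hne
      · exact ⟨[], by simpa using star_nil X⟩
      obtain ⟨τ, hτ⟩ := hF.2.2.2 W₀ hW₀F w hw
      have hwsufW : w <:+ W₀ ++ τ ++ w := ⟨W₀ ++ τ, by simp [List.append_assoc]⟩
      have hXsuf : ∃ x ∈ X, x <:+ W₀ ++ τ ++ w := by
        by_contra hno
        have hWpre : W₀ ++ τ ++ w ∈ preS X (W₀ ++ τ ++ w) :=
          ⟨List.prefix_refl _, hno⟩
        have hsub : preS X W₀ ⊆ preS X (W₀ ++ τ ++ w) := by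
          rintro v ⟨hv1, hv2⟩
          refine ⟨hv1.trans ?_, hv2⟩
          rw [List.append_assoc]
          exact List.prefix_append _ _
        have hle : (preS X (W₀ ++ τ ++ w)).ncard ≤ (preS X W₀).ncard := by
          rw [← delta_eq_preS hXp, ← delta_eq_preS hXp]
          exact hmaxδ _ hτ
        have heq := Set.eq_of_subset_of_ncard_le hsub hle (preS_finite _ _)
        have hmem : W₀ ++ τ ++ w ∈ preS X W₀ := by rw [heq]; exact hWpre
        have hlenle : (W₀ ++ τ ++ w).length ≤ W₀.length := hmem.1.length_le
        have hwpos : 0 < w.length := List.length_pos_iff.mpr hne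
        simp only [List.length_append] at hlenle
        omega
      obtain ⟨x, hxX, ρ, hρ⟩ := hXsuf
      rcases le_or_gt x.length w.length with hle | hlt
      · have hxw : x <:+ w := List.suffix_of_suffix_length_le ⟨ρ, hρ⟩ hwsufW hle
        obtain ⟨wt, hwt⟩ := hxw
        have hwtF : w ∈ F → wt ∈ F := fun _ => hF.1 w hw wt ⟨[], x, by simp [hwt]⟩
        have hxlen : 0 < x.length := List.length_pos_iff.mpr (hXp.2.1 x hxX)
        have hwtlen : wt.length ≤ n := by
          have := congrArg List.length hwt
          simp only [List.length_append] at this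
          omega
        obtain ⟨y, hy⟩ := ih wt (hwtF hw) hwtlen
        refine ⟨y, ?_⟩
        rw [← hwt, ← List.append_assoc]
        exact star_append hy (mem_star_of_mem hxX)
      · have hwx : w <:+ x := List.suffix_of_suffix_length_le hwsufW ⟨ρ, hρ⟩ (Nat.le_of_lt hlt)
        obtain ⟨σ, hσ⟩ := hwx
        exact ⟨σ, hσ.symm ▸ mem_star_of_mem hxX⟩
  intro w hw
  exact H w.length w hw le_rfl

lemma rightC_all [Finite M] {F X : Set (List A)} (hF : Recurrent F)
    (hX : IsFMaximalBifixCode F X) {η : List A → M} (hη : IsSyntacticHom (star X) η) :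
    ∀ w ∈ F, RightC X w := by
  obtain ⟨W₀, hW₀F, hmaxδ⟩ := exists_max_delta hF hX hη
  have hXp := hX.1.1
  have hXs := hX.1.2
  have H : ∀ n, ∀ w, w ∈ F → w.length ≤ n → RightC X w := by
    intro n
    induction n with
    | zero =>
      intro w _ hlen
      have : w = [] := List.eq_nil_of_length_eq_zero (Nat.le_zero.1 hlen)
      exact ⟨[], by simpa [this] using star_nil X⟩
    | succ n ih =>
      intro w hw hlen
      rcases eq_or_ne w [] with rfl | hne
      · exact ⟨[], by simpa using star_nil X⟩
      obtain ⟨τ, hτ⟩ := hF.2.2.2 w hw W₀ hW₀F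
      have hwpreW : w <+: w ++ τ ++ W₀ := by
        rw [List.append_assoc]; exact List.prefix_append _ _
      have hXpre : ∃ x ∈ X, x <+: w ++ τ ++ W₀ := by
        by_contra hno
        have hWsuf : w ++ τ ++ W₀ ∈ sufS X (w ++ τ ++ W₀) :=
          ⟨List.suffix_refl _, hno⟩
        have hsub : sufS X W₀ ⊆ sufS X (w ++ τ ++ W₀) := by
          rintro v ⟨hv1, hv2⟩
          exact ⟨hv1.trans (List.suffix_append _ _), hv2⟩
        have hle : (sufS X (w ++ τ ++ W₀)).ncard ≤ (sufS X W₀).ncard := by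
          rw [← delta_eq_sufS hXs, ← delta_eq_sufS hXs]
          exact hmaxδ _ hτ
        have heq := Set.eq_of_subset_of_ncard_le hsub hle (sufS_finite _ _)
        have hmem : w ++ τ ++ W₀ ∈ sufS X W₀ := by rw [heq]; exact hWsuf
        have hlenle : (w ++ τ ++ W₀).length ≤ W₀.length := hmem.1.length_le
        have hwpos : 0 < w.length := List.length_pos_iff.mpr hne
        simp only [List.length_append] at hlenle
        omega
      obtain ⟨x, hxX, ρ, hρ⟩ := hXpre
      rcases le_or_gt x.length w.length with hle | hlt
      · have hxw : x <+: w := List.prefix_of_prefix_length_le ⟨ρ, hρ⟩ hwpreW hle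
        obtain ⟨wt, hwt⟩ := hxw
        have hwtF : wt ∈ F := hF.1 w hw wt ⟨x, [], by simp [hwt]⟩
        have hxlen : 0 < x.length := List.length_pos_iff.mpr (hXp.2.1 x hxX)
        have hwtlen : wt.length ≤ n := by
          have := congrArg List.length hwt
          simp only [List.length_append] at this
          omega
        obtain ⟨z, hz⟩ := ih wt hwtF hwtlen
        refine ⟨z, ?_⟩
        rw [← hwt, List.append_assoc]
        exact star_append (mem_star_of_mem hxX) hz
      · have hwx : w <+: x := List.prefix_of_prefix_length_le hwpreW ⟨ρ, hρ⟩ (Nat.le_of_lt hlt)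
        obtain ⟨σ, hσ⟩ := hwx
        exact ⟨σ, hσ.symm ▸ mem_star_of_mem hxX⟩
  intro w hw
  exact H w.length w hw le_rfl

end S5

namespace S5
open PaperDefs

variable {A : Type*} {M : Type*} [Monoid M]

/-! ### Rank machinery -/

/-- The set of rows of right translates of `m`. -/
def RIm (η : List A → M) (X : Set (List A)) (m : M) : Set (Set M) :=
  Set.range (fun n => rowm η X (n * m))

/-- The rank of `m`. -/
noncomputable def rk (η : List A → M) (X : Set (List A)) (m : M) : ℕ :=
  (RIm η X m \ {∅}).ncard

lemma JLe_refl (m : M) : JLe m m := ⟨1, 1, by simp⟩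

lemma JLe_trans {a b c : M} (h1 : JLe a b) (h2 : JLe b c) : JLe a c := by
  obtain ⟨x, y, rfl⟩ := h1
  obtain ⟨x', y', rfl⟩ := h2
  exact ⟨x * x', y' * y, by simp [mul_assoc]⟩

lemma rk_mono [Finite M] (η : List A → M) (X : Set (List A)) {m m' : M}
    (h : JLe m m') : rk η X m ≤ rk η X m' := by
  obtain ⟨x, y, rfl⟩ := h
  have hsub : RIm η X (x * m' * y) \ {∅} ⊆
      (fun s => {k | y * k ∈ s}) '' (RIm η X m' \ {∅}) := by
    rintro s ⟨⟨n, rfl⟩, hne⟩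
    simp only [Set.mem_singleton_iff] at hne
    have heq : rowm η X (n * (x * m' * y)) = {k | y * k ∈ rowm η X (n * x * m')} := by
      ext k
      simp only [rowm, Set.mem_setOf_eq, mul_assoc]
    refine ⟨rowm η X (n * x * m'), ⟨⟨n * x, rfl⟩, ?_⟩, heq.symm⟩
    simp only [Set.mem_singleton_iff]
    intro hemp
    apply hne
    rw [heq, hemp]
    simp
  calc (RIm η X (x * m' * y) \ {∅}).ncard
      ≤ ((fun s => {k | y * k ∈ s}) '' (RIm η X m' \ {∅})).ncard :=
        Set.ncard_le_ncard hsub (Set.toFinite _)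
    _ ≤ (RIm η X m' \ {∅}).ncard := Set.ncard_image_le (Set.toFinite _)

lemma rk_eq_of_J [Finite M] (η : List A → M) (X : Set (List A)) {m m' : M}
    (h1 : JLe m m') (h2 : JLe m' m) : rk η X m = rk η X m' :=
  le_antisymm (rk_mono η X h1) (rk_mono η X h2)

/-! ### The minimal `J`-class met by `F` -/

/-- The two-sided ideal generated by `m`. -/
def idl (m : M) : Set M := {x | ∃ a b, x = a * m * b}

lemma mem_idl_self (m : M) : m ∈ idl m := ⟨1, 1, by simp⟩

lemma idl_mono {m m' : M} (h : JLe m m') : idl m ⊆ idl m' := by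
  obtain ⟨c, d, rfl⟩ := h
  rintro x ⟨a, b, rfl⟩
  exact ⟨a * c, d * b, by simp [mul_assoc]⟩

lemma exists_K [Finite M] {F : Set (List A)} (hF : Recurrent F) {X : Set (List A)}
    {η : List A → M} (hη : IsSyntacticHom (star X) η) :
    ∃ w₀ ∈ F, ∀ w ∈ F, JLe (η w₀) (η w) := by
  obtain ⟨m₀, hm₀, hmin⟩ := Set.exists_min_image (η '' F) (fun m => (idl m).ncard)
    (Set.toFinite _) (hF.2.1.image η)
  obtain ⟨w₀, hw₀F, rfl⟩ := hm₀
  refine ⟨w₀, hw₀F, ?_⟩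
  intro w hw
  obtain ⟨τ, hτ⟩ := hF.2.2.2 w₀ hw₀F w hw
  have hceq : η (w₀ ++ τ ++ w) = η w₀ * η τ * η w := by
    rw [hη.map_append, hη.map_append]
  have hc1 : JLe (η (w₀ ++ τ ++ w)) (η w₀) := ⟨1, η τ * η w, by rw [hceq]; simp [mul_assoc]⟩
  have hc2 : JLe (η (w₀ ++ τ ++ w)) (η w) := ⟨η w₀ * η τ, 1, by rw [hceq]; simp [mul_assoc]⟩
  have hsub : idl (η (w₀ ++ τ ++ w)) ⊆ idl (η w₀) := idl_mono hc1
  have hle : (idl (η w₀)).ncard ≤ (idl (η (w₀ ++ τ ++ w))).ncard :=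
    hmin _ ⟨_, hτ, rfl⟩
  have heq := Set.eq_of_subset_of_ncard_le hsub hle (Set.toFinite _)
  have hmem : η w₀ ∈ idl (η (w₀ ++ τ ++ w)) := by
    rw [heq]; exact mem_idl_self _
  obtain ⟨a, b, hab⟩ := hmem
  exact JLe_trans ⟨a, b, hab⟩ hc2

/-! ### Upper bound: `δ(W) ≤ rank (η W)` -/

lemma delta_le_rk [Finite M] {F X : Set (List A)} (hF : Recurrent F)
    (hX : IsFMaximalBifixCode F X) {η : List A → M} (hη : IsSyntacticHom (star X) η)
    {W : List A} (hW : W ∈ F) : delta X W ≤ rk η X (η W) := by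
  have hXp := hX.1.1
  have hXs := hX.1.2
  rw [delta_eq_sufS hXs]
  have himg : (fun u => rowm η X (η u)) '' sufS X W ⊆ RIm η X (η W) \ {∅} := by
    rintro s ⟨u, hu, rfl⟩
    obtain ⟨p, hp⟩ := hu.1
    have hpF : p ∈ F := hF.1 W hW p ⟨[], u, by simp [hp]⟩
    obtain ⟨y, hyp⟩ := leftC_all hF hX hη p hpF
    constructor
    · refine ⟨η y, ?_⟩
      show rowm η X (η y * η W) = rowm η X (η u)
      have h1 : η y * η W = η (y ++ W) := (hη.map_append _ _).symm
      rw [h1]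
      ext k
      obtain ⟨z, rfl⟩ := hη.surj k
      rw [row_words hη, row_words hη]
      constructor
      · intro h
        apply right_unitary hXp hyp
        have he : (y ++ p) ++ (u ++ z) = (y ++ W) ++ z := by rw [← hp]; simp [List.append_assoc]
        rw [he]; exact h
      · intro h
        have he : (y ++ W) ++ z = (y ++ p) ++ (u ++ z) := by rw [← hp]; simp [List.append_assoc]
        rw [he]; exact star_append hyp h
    · simp only [Set.mem_singleton_iff]
      intro hemp
      obtain ⟨z, hz⟩ := rightC_all hF hX hη u (hF.1 W hW u hu.1.isInfix)
      have : η z ∈ rowm η X (η u) := (row_words hη u z).2 hz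
      rw [hemp] at this
      exact this
  have hinj : Set.InjOn (fun u => rowm η X (η u)) (sufS X W) := by
    intro u hu u' hu' he
    exact row_inj_sufS hXp hXs hη hu hu'
      (rightC_all hF hX hη u (hF.1 W hW u hu.1.isInfix)) he
  calc (sufS X W).ncard
      = ((fun u => rowm η X (η u)) '' sufS X W).ncard := (Set.ncard_image_of_injOn hinj).symm
    _ ≤ (RIm η X (η W) \ {∅}).ncard := Set.ncard_le_ncard himg (Set.toFinite _)

/-! ### Lower bound: realizing all rows as suffix rows -/

lemma step_realize [Finite M] {F X : Set (List A)} (hF : Recurrent F)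
    (hX : IsFMaximalBifixCode F X) {η : List A → M} (hη : IsSyntacticHom (star X) η)
    {w₀ V : List A} (hV : V ∈ F) (hVe : ∃ t, V = t ++ w₀)
    {R : Set M} (hR : R ∈ RIm η X (η V)) (hRne : R ≠ ∅) :
    ∃ V' u, (V' ∈ F ∧ ∃ t, V' = t ++ w₀) ∧ V <:+ V' ∧ u ∈ sufS X V' ∧ rowm η X (η u) = R := by
  have hXp := hX.1.1
  obtain ⟨n, hn0⟩ := hR
  obtain ⟨y, rfl⟩ := hη.surj n
  have hn : rowm η X (η y * η V) = R := hn0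
  clear hn0
  obtain ⟨k, hk⟩ := Set.nonempty_iff_ne_empty.2 hRne
  obtain ⟨z, rfl⟩ := hη.surj k
  have hzR : η z ∈ rowm η X (η (y ++ V)) := by
    rw [hη.map_append, hn]; exact hk
  have hG : (y ++ V) ++ z ∈ star X := (row_words hη _ _).1 hzR
  obtain ⟨l, hl, hfl⟩ := hG
  rcases split_blocks l hl (y ++ V) z hfl with
    ⟨l₁, l₂, rfl, hf₁⟩ | ⟨l₁, zb, l₂, z₁, z₂, rfl, hzb, hz₁, hz₂, hf₁⟩
  · -- exact cut at the boundary : take u = []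
    refine ⟨V, [], ⟨hV, hVe⟩, List.suffix_refl _, ⟨List.nil_suffix, noXP_nil hXp⟩, ?_⟩
    rw [← hn]
    have h1 : η y * η V = η (y ++ V) := (hη.map_append _ _).symm
    rw [h1]
    have hyV : y ++ V ∈ star X := hf₁ ▸ ⟨l₁, fun b hb => hl b (by simp [hb]), rfl⟩
    ext k
    obtain ⟨z', rfl⟩ := hη.surj k
    rw [row_words hη, row_words hη]
    simp only [List.nil_append]
    constructor
    · intro h; exact star_append hyV h
    · intro h; exact right_unitary hXp hyV h
  · set C := l₁.flatten with hC
    have hCstar : C ∈ star X := ⟨l₁, fun b hb => hl b (by simp [hb]), rfl⟩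
    have hzbX : zb ∈ X := hl zb (by simp)
    have hz₁nX : NoXP X z₁ := by
      rintro ⟨s, hs, hsp⟩
      have hszb : s <+: zb := hzb ▸ hsp.trans (List.prefix_append z₁ z₂)
      have hseq := hXp.2.2 s hs zb hzbX hszb
      subst hseq
      have h1 := hsp.length_le
      have h2 := congrArg List.length hzb
      simp only [List.length_append] at h2
      have h3 : 0 < z₂.length := List.length_pos_iff.mpr hz₂
      omega
    have hrowC : rowm η X (η y * η V) = rowm η X (η z₁) := by
      have h1 : η y * η V = η (y ++ V) := (hη.map_append _ _).symm
      rw [h1]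
      ext k
      obtain ⟨z', rfl⟩ := hη.surj k
      rw [row_words hη, row_words hη]
      constructor
      · intro h
        apply right_unitary hXp hCstar
        have he : C ++ (z₁ ++ z') = (y ++ V) ++ z' := by rw [← hf₁]; simp [List.append_assoc]
        rw [he]; exact h
      · intro h
        have he : (y ++ V) ++ z' = C ++ (z₁ ++ z') := by rw [← hf₁]; simp [List.append_assoc]
        rw [he]; exact star_append hCstar h
    rcases le_or_gt y.length C.length with hle | hlt
    · -- the cut is inside the window
      have hCpre : C <+: y ++ V := ⟨z₁, hf₁⟩
      have hyC : y <+: C := List.prefix_of_prefix_length_le (List.prefix_append _ _) hCpre hle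
      obtain ⟨p, hp⟩ := hyC
      have hV2 : V = p ++ z₁ := by
        have he : y ++ V = y ++ (p ++ z₁) := by
          rw [← List.append_assoc, hp, hf₁]
        exact List.append_cancel_left he
      exact ⟨V, z₁, ⟨hV, hVe⟩, List.suffix_refl _, ⟨⟨p, hV2.symm⟩, hz₁nX⟩, by rw [← hn, hrowC]⟩
    · -- the block covers the whole window
      have hCpre : C <+: y :=
        List.prefix_of_prefix_length_le ⟨z₁, hf₁⟩ (List.prefix_append y V) (Nat.le_of_lt hlt)
      obtain ⟨s, hs⟩ := hCpre
      have hz₁2 : z₁ = s ++ V := by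
        have he : C ++ (s ++ V) = C ++ z₁ := by rw [← List.append_assoc, hs, hf₁]
        exact (List.append_cancel_left he).symm
      have hz₁F : z₁ ∈ F :=
        hF.1 zb (hX.2.1 hzbX) z₁ ⟨[], z₂, by simp [hzb]⟩
      refine ⟨z₁, z₁, ⟨hz₁F, ?_⟩, ⟨s, hz₁2.symm⟩, ⟨List.suffix_refl _, hz₁nX⟩, by rw [← hn, hrowC]⟩
      obtain ⟨t, rfl⟩ := hVe
      exact ⟨s ++ t, by rw [hz₁2, List.append_assoc]⟩

lemma realize_all [Finite M] {F X : Set (List A)} (hF : Recurrent F)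
    (hX : IsFMaximalBifixCode F X) {η : List A → M} (hη : IsSyntacticHom (star X) η)
    {w₀ : List A} (hw₀F : w₀ ∈ F) (hK : ∀ w ∈ F, JLe (η w₀) (η w)) :
    ∀ T : Finset (Set M), (↑T ⊆ RIm η X (η w₀) \ {∅}) →
      ∃ V, (V ∈ F ∧ ∃ t, V = t ++ w₀) ∧
        ∀ R ∈ T, ∃ u ∈ sufS X V, rowm η X (η u) = R := by
  classical
  intro T
  induction T using Finset.induction_on with
  | empty =>
    intro _
    exact ⟨w₀, ⟨hw₀F, ⟨[], rfl⟩⟩, by simp⟩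
  | @insert R T hRT ih =>
    intro hsub
    have hsub' : ↑T ⊆ RIm η X (η w₀) \ {∅} := by
      intro x hx
      exact hsub (by simp [hx])
    obtain ⟨V, ⟨hVF, hVe⟩, hreal⟩ := ih hsub'
    have hRmem : R ∈ RIm η X (η w₀) \ {∅} := hsub (by simp)
    have hVsub : RIm η X (η V) \ {∅} ⊆ RIm η X (η w₀) \ {∅} := by
      rintro sR ⟨⟨n, rfl⟩, hne⟩
      obtain ⟨t, ht⟩ := hVe
      refine ⟨⟨n * η t, ?_⟩, hne⟩
      show rowm η X (n * η t * η w₀) = rowm η X (n * η V)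
      rw [ht, hη.map_append, ← mul_assoc]
    have hrkV : rk η X (η V) = rk η X (η w₀) := by
      apply rk_eq_of_J
      · obtain ⟨t, ht⟩ := hVe
        exact ⟨η t, 1, by rw [ht, hη.map_append]; simp⟩
      · exact hK V hVF
    have hseteq : RIm η X (η V) \ {∅} = RIm η X (η w₀) \ {∅} := by
      apply Set.eq_of_subset_of_ncard_le hVsub _ (Set.toFinite _)
      have h' : (RIm η X (η w₀) \ {∅}).ncard = (RIm η X (η V) \ {∅}).ncard := hrkV.symm
      exact le_of_eq h' 
    have hRV : R ∈ RIm η X (η V) := by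
      have : R ∈ RIm η X (η V) \ {∅} := by rw [hseteq]; exact hRmem
      exact this.1
    have hRne : R ≠ ∅ := by
      have := hRmem.2
      simpa using this
    obtain ⟨V', u, hQ, hVV', huS, hrow⟩ := step_realize hF hX hη hVF hVe hRV hRne
    refine ⟨V', hQ, ?_⟩
    intro R' hR'
    rcases Finset.mem_insert.1 hR' with rfl | hR'
    · exact ⟨u, huS, hrow⟩
    · obtain ⟨u', hu'S, hu'row⟩ := hreal R' hR'
      exact ⟨u', ⟨hu'S.1.trans hVV', hu'S.2⟩, hu'row⟩

lemma rk_le_delta [Finite M] {F X : Set (List A)} (hF : Recurrent F)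
    (hX : IsFMaximalBifixCode F X) {η : List A → M} (hη : IsSyntacticHom (star X) η)
    {w₀ : List A} (hw₀F : w₀ ∈ F) (hK : ∀ w ∈ F, JLe (η w₀) (η w)) :
    ∃ V ∈ F, rk η X (η w₀) ≤ delta X V := by
  classical
  have hfin : (RIm η X (η w₀) \ {∅}).Finite := Set.toFinite _
  obtain ⟨V, ⟨hVF, -⟩, hreal⟩ := realize_all hF hX hη hw₀F hK hfin.toFinset
    (by rw [Set.Finite.coe_toFinset])
  refine ⟨V, hVF, ?_⟩
  rw [delta_eq_sufS hX.1.2]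
  have hsub : RIm η X (η w₀) \ {∅} ⊆ (fun u => rowm η X (η u)) '' sufS X V := by
    intro R hR
    obtain ⟨u, huS, hurow⟩ := hreal R (by rwa [Set.Finite.mem_toFinset])
    exact ⟨u, huS, hurow⟩
  calc rk η X (η w₀) = (RIm η X (η w₀) \ {∅}).ncard := rfl
    _ ≤ ((fun u => rowm η X (η u)) '' sufS X V).ncard :=
        Set.ncard_le_ncard hsub (Set.toFinite _)
    _ ≤ (sufS X V).ncard := Set.ncard_image_le (sufS_finite _ _)

end S5

namespace S5
open PaperDefs

variable {A : Type*} {M : Type*} [Monoid M]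

/-- Abstract lemma: a subgroup acting faithfully by permutations on a finite set of
cardinality `d` embeds into `Perm (Fin d)`. -/
lemma embed_perm_aux {α : Type*} [Finite α] (T : Set α) (S : Set M)
    (hmul : ∀ x ∈ S, ∀ y ∈ S, x * y ∈ S) (e : M) (heS : e ∈ S)
    (hinv : ∀ x ∈ S, ∃ y ∈ S, x * y = e ∧ y * x = e)
    (act : α → M → α)
    (hcomp : ∀ s (g h : M), act (act s g) h = act s (g * h))
    (hT : ∀ g ∈ S, ∀ s ∈ T, act s g ∈ T)
    (he : ∀ s ∈ T, act s e = s)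
    (hfaith : ∀ x ∈ S, ∀ y ∈ S, (∀ s ∈ T, act s x = act s y) → x = y)
    (d : ℕ) (hd : Nat.card T = d) :
    ∃ φ : M → Equiv.Perm (Fin d), Set.InjOn φ S ∧
      ∀ x ∈ S, ∀ y ∈ S, φ (x * y) = φ x * φ y := by
  classical
  have hfinT : Finite T := (Set.toFinite T).to_subtype
  let eqv : T ≃ Fin d := Finite.equivFinOfCardEq hd
  let Fm : M → Fin d → Fin d := fun g i =>
    if hg : g ∈ S then eqv ⟨act ((eqv.symm i) : α) g, hT g hg _ (eqv.symm i).2⟩ else i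
  have hFm : ∀ g (hg : g ∈ S) i,
      Fm g i = eqv ⟨act ((eqv.symm i) : α) g, hT g hg _ (eqv.symm i).2⟩ := by
    intro g hg i; simp only [Fm, dif_pos hg]
  have hFcomp : ∀ x, x ∈ S → ∀ y, y ∈ S → ∀ i, Fm y (Fm x i) = Fm (x * y) i := by
    intro x hx y hy i
    rw [hFm x hx, hFm y hy, hFm (x * y) (hmul x hx y hy)]
    congr 1
    apply Subtype.ext
    simp only [Equiv.symm_apply_apply]
    exact hcomp _ x y
  have hFe : ∀ i, Fm e i = i := by
    intro i
    rw [hFm e heS]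
    have h1 := he ((eqv.symm i) : α) (eqv.symm i).2
    have h2 : (⟨act ((eqv.symm i) : α) e, hT e heS _ (eqv.symm i).2⟩ : T) = eqv.symm i :=
      Subtype.ext h1
    rw [h2, Equiv.apply_symm_apply]
  have hbij : ∀ g ∈ S, Function.Bijective (Fm g) := by
    intro g hg
    obtain ⟨g', hg'S, hgg', hg'g⟩ := hinv g hg
    refine Function.bijective_iff_has_inverse.2 ⟨Fm g', ?_, ?_⟩
    · intro i
      rw [hFcomp g hg g' hg'S, hgg', hFe]
    · intro i
      rw [hFcomp g' hg'S g hg, hg'g, hFe]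
  let P : ∀ g, g ∈ S → Equiv.Perm (Fin d) := fun g hg => Equiv.ofBijective _ (hbij g hg)
  have hPapp : ∀ g (hg : g ∈ S) i, P g hg i = Fm g i := fun g hg i => rfl
  let φ : M → Equiv.Perm (Fin d) := fun g =>
    if hg : g ∈ S then (P g hg)⁻¹ else 1
  have hφ : ∀ g (hg : g ∈ S), φ g = (P g hg)⁻¹ := by
    intro g hg; simp only [φ, dif_pos hg]
  refine ⟨φ, ?_, ?_⟩
  · intro x hx y hy hxy
    rw [hφ x hx, hφ y hy] at hxy
    have hP : P x hx = P y hy := by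
      have := congrArg (·⁻¹) hxy
      simpa using this
    apply hfaith x hx y hy
    intro s hs
    have h1 : Fm x (eqv ⟨s, hs⟩) = Fm y (eqv ⟨s, hs⟩) := by
      rw [← hPapp x hx, ← hPapp y hy, hP]
    rw [hFm x hx, hFm y hy] at h1
    have h2 := eqv.injective h1
    have h3 := congrArg Subtype.val h2
    simpa [Equiv.symm_apply_apply] using h3
  · intro x hx y hy
    have hxyS := hmul x hx y hy
    rw [hφ x hx, hφ y hy, hφ _ hxyS]
    have hPmul : P (x * y) hxyS = P y hy * P x hx := by
      apply Equiv.ext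
      intro i
      rw [hPapp (x * y) hxyS i]
      have h0 : (P y hy * P x hx) i = P y hy (P x hx i) := rfl
      rw [h0, hPapp x hx i, hPapp y hy (Fm x i), hFcomp x hx y hy]
    rw [hPmul, mul_inv_rev]

/-- The main group-embedding lemma. -/
lemma group_embed [Finite M] {F X : Set (List A)} (hF : Recurrent F)
    (hX : IsFMaximalBifixCode F X) {η : List A → M} (hη : IsSyntacticHom (star X) η)
    {w₀ : List A} (hw₀F : w₀ ∈ F) (hK : ∀ w ∈ F, JLe (η w₀) (η w))
    (S : Set M) (hS : IsSubgroupIn S) (hSJ : ∀ m ∈ S, InFMinJ η F m) :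
    ∃ φ : M → Equiv.Perm (Fin (rk η X (η w₀))),
      Set.InjOn φ S ∧ ∀ x ∈ S, ∀ y ∈ S, φ (x * y) = φ x * φ y := by
  classical
  obtain ⟨hne, hmul, e, heS, hid, hinv⟩ := hS
  have hee : e * e = e := (hid e heS).1
  obtain ⟨⟨wit, hwitF, hJwit⟩, hall⟩ := hSJ e heS
  have hJe : JLe e (η w₀) := hall w₀ hw₀F
  have hJe' : JLe (η w₀) e := JLe_trans (hK wit hwitF) hJwit.2
  have hrke : rk η X e = rk η X (η w₀) := rk_eq_of_J η X hJe hJe'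
  set T : Set (Set M) := RIm η X e \ {∅} with hT
  have hact_row : ∀ (n g : M), {k | g * k ∈ rowm η X n} = rowm η X (n * g) := by
    intro n g; ext k; simp [rowm, mul_assoc]
  have hrow_e : ∀ n : M, rowm η X (n * e * e) = rowm η X (n * e) := by
    intro n; rw [mul_assoc, hee]
  -- the action
  have hT_act : ∀ g ∈ S, ∀ s ∈ T, {k | g * k ∈ s} ∈ T := by
    rintro g hg s ⟨⟨n, rfl⟩, hne'⟩
    simp only [Set.mem_singleton_iff] at hne'
    have hng : (n * e) * g = (n * g) * e := by
      rw [mul_assoc, (hid g hg).1, mul_assoc, (hid g hg).2]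
    have hs_eq : {k | g * k ∈ rowm η X (n * e)} = rowm η X ((n * g) * e) := by
      rw [hact_row, hng]
    constructor
    · exact ⟨n * g, hs_eq.symm⟩
    · -- nonemptiness via the inverse
      obtain ⟨g', hg'S, hgg', hg'g⟩ := hinv g hg
      simp only [Set.mem_singleton_iff]
      intro hemp
      apply hne'
      have hback : {k | g' * k ∈ {k | g * k ∈ rowm η X (n * e)}} = rowm η X (n * e) := by
        ext k
        show (n * e) * (g * (g' * k)) ∈ img η X ↔ (n * e) * k ∈ img η X
        rw [← mul_assoc g g' k, hgg', ← mul_assoc (n * e) e k, mul_assoc n e e, hee]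
      rw [hemp] at hback
      simp only [Set.mem_empty_iff_false, Set.setOf_false] at hback
      exact hback.symm
  have hact_e : ∀ s ∈ T, {k | e * k ∈ s} = s := by
    rintro s ⟨⟨n, rfl⟩, -⟩
    show {k | e * k ∈ rowm η X (n * e)} = rowm η X (n * e)
    rw [hact_row, mul_assoc, hee]
  have hfaith : ∀ x ∈ S, ∀ y ∈ S, (∀ s ∈ T, {k | x * k ∈ s} = {k | y * k ∈ s}) → x = y := by
    intro x hx y hy hsame
    have hrowx : ∀ n : M, rowm η X (n * x) = {k | x * k ∈ rowm η X (n * e)} := by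
      intro n
      rw [hact_row]
      congr 1
      rw [mul_assoc, (hid x hx).1]
    have hrowy : ∀ n : M, rowm η X (n * y) = {k | y * k ∈ rowm η X (n * e)} := by
      intro n
      rw [hact_row]
      congr 1
      rw [mul_assoc, (hid y hy).1]
    have key : ∀ n k : M, (n * x) * k ∈ img η X ↔ (n * y) * k ∈ img η X := by
      intro n k
      by_cases hemp : rowm η X (n * e) = ∅
      · have hx0 : rowm η X (n * x) = ∅ := by rw [hrowx, hemp]; simp
        have hy0 : rowm η X (n * y) = ∅ := by rw [hrowy, hemp]; simp
        have haux : ∀ m : M, rowm η X m = ∅ → ¬ (m * k ∈ img η X) := by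
          intro m hm hk
          have hkk : k ∈ rowm η X m := hk
          rw [hm] at hkk
          exact hkk
        exact iff_of_false (haux _ hx0) (haux _ hy0)
      · have hsT : rowm η X (n * e) ∈ T := ⟨⟨n, rfl⟩, by simpa using hemp⟩
        have h3 : rowm η X (n * x) = rowm η X (n * y) := by
          rw [hrowx, hrowy, hsame _ hsT]
        constructor
        · intro h
          have hkk : k ∈ rowm η X (n * x) := h
          rw [h3] at hkk
          exact hkk
        · intro h
          have hkk : k ∈ rowm η X (n * y) := h
          rw [← h3] at hkk
          exact hkk
    obtain ⟨a, rfl⟩ := hη.surj x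
    obtain ⟨b, rfl⟩ := hη.surj y
    rw [hη.syn]
    intro p q
    have h1 : p ++ a ++ q ∈ star X ↔ η (p ++ a ++ q) ∈ img η X := (mem_img hη _).symm
    have h2 : p ++ b ++ q ∈ star X ↔ η (p ++ b ++ q) ∈ img η X := (mem_img hη _).symm
    rw [h1, h2, hη.map_append, hη.map_append p a, hη.map_append, hη.map_append p b]
    exact key (η p) (η q)
  have hd : Nat.card T = rk η X (η w₀) := by
    rw [Nat.card_coe_set_eq]
    exact hrke
  exact embed_perm_aux T S hmul e heS hinv (fun s g => {k | g * k ∈ s})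
    (by intro s g h; ext k; show g * (h * k) ∈ s ↔ (g * h) * k ∈ s; rw [mul_assoc])
    hT_act hact_e hfaith _ hd

end S5

namespace S5
open PaperDefs

variable {A : Type*}

lemma univ_recurrent [Nonempty A] : Recurrent (Set.univ : Set (List A)) := by
  refine ⟨fun _ _ _ _ => trivial, ⟨[], trivial⟩, ?_, fun u _ v _ => ⟨[], trivial⟩⟩
  intro h
  obtain ⟨a⟩ := ‹Nonempty A›
  have hm : ([a] : List A) ∈ (Set.univ : Set (List A)) := trivial
  rw [h] at hm
  simp at hm

lemma minIdeal_to_FMinJ {M : Type*} [Monoid M] {η : List A → M}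
    (hsurj : Function.Surjective η) {m : M} (h : InMinIdeal m) :
    InFMinJ η Set.univ m := by
  obtain ⟨w, hw⟩ := hsurj m
  exact ⟨⟨w, trivial, by rw [hw]; exact ⟨JLe_refl m, JLe_refl m⟩⟩, fun w _ => h (η w)⟩

theorem master (F X : Set (List A)) (hF : Recurrent F)
    (hX : IsFMaximalBifixCode F X)
    {M : Type*} [Monoid M] [Finite M] {η : List A → M}
    (hη : IsSyntacticHom (star X) η) :
    ∃ d : ℕ, Fdeg X F = (d : ℕ∞) ∧
      ∀ S : Set M, IsSubgroupIn S → (∀ m ∈ S, InFMinJ η F m) →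
        ∃ φ : M → Equiv.Perm (Fin d),
          Set.InjOn φ S ∧ ∀ x ∈ S, ∀ y ∈ S, φ (x * y) = φ x * φ y := by
  obtain ⟨w₀, hw₀F, hK⟩ := exists_K hF hη
  refine ⟨rk η X (η w₀), ?_, ?_⟩
  · have hub : ∀ w ∈ F, delta X w ≤ rk η X (η w₀) := by
      intro w hw
      obtain ⟨τ, hτ⟩ := hF.2.2.2 w hw w₀ hw₀F
      have h1 : delta X w ≤ delta X (w ++ τ ++ w₀) :=
        delta_mono hX.1 ⟨[], τ ++ w₀, by simp [List.append_assoc]⟩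
      have h2 : delta X (w ++ τ ++ w₀) ≤ rk η X (η (w ++ τ ++ w₀)) :=
        delta_le_rk hF hX hη hτ
      have h3 : rk η X (η (w ++ τ ++ w₀)) = rk η X (η w₀) := by
        apply rk_eq_of_J
        · refine ⟨η (w ++ τ), 1, ?_⟩
          rw [mul_one, ← hη.map_append, List.append_assoc]
        · exact hK _ hτ
      omega
    obtain ⟨V, hVF, hlb⟩ := rk_le_delta hF hX hη hw₀F hK
    unfold Fdeg
    apply le_antisymm
    · apply iSup₂_le
      intro w hw
      exact_mod_cast hub w hw
    · calc ((rk η X (η w₀) : ℕ) : ℕ∞) ≤ ((delta X V : ℕ) : ℕ∞) := by exact_mod_cast hlb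
        _ ≤ ⨆ w ∈ F, ((delta X w : ℕ) : ℕ∞) :=
          le_iSup₂ (f := fun w (_ : w ∈ F) => ((delta X w : ℕ) : ℕ∞)) V hVF
  · intro S hS hSJ
    exact group_embed hF hX hη hw₀F hK S hS hSJ

end S5

open PaperDefs in
theorem stmt_5 {A : Type} [Fintype A] [Nonempty A]
    (F X : Set (List A)) (hF : Recurrent F)
    (hX : IsFMaximalBifixCode F X) (hrat : IsRational X)
    {MX : Type} [Monoid MX] [Finite MX] {ηX : List A → MX}
    (hηX : IsSyntacticHom (star X) ηX) :
    (∃ d : ℕ, Fdeg X F = (d : ℕ∞) ∧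
      ∀ S : Set MX, IsSubgroupIn S → (∀ m ∈ S, InFMinJ ηX F m) →
        ∃ φ : MX → Equiv.Perm (Fin d),
          Set.InjOn φ S ∧ ∀ x ∈ S, ∀ y ∈ S, φ (x * y) = φ x * φ y) ∧
    (∀ Z : Set (List A), IsFMaximalBifixCode Set.univ Z → IsRational Z →
      ∀ (MZ : Type) [Monoid MZ] [Finite MZ] (ηZ : List A → MZ),
        IsSyntacticHom (star Z) ηZ →
        ∃ d : ℕ, deg Z = (d : ℕ∞) ∧
          ∀ S : Set MZ, IsSubgroupIn S → (∀ m ∈ S, InMinIdeal m) →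
            ∃ φ : MZ → Equiv.Perm (Fin d),
              Set.InjOn φ S ∧ ∀ x ∈ S, ∀ y ∈ S, φ (x * y) = φ x * φ y) := by
  constructor
  · exact S5.master F X hF hX hηX
  · intro Z hZ _ MZ _ _ ηZ hηZ
    obtain ⟨d, hd, hgroups⟩ := S5.master Set.univ Z S5.univ_recurrent hZ hηZ
    refine ⟨d, hd, ?_⟩
    intro S hS hmin
    exact hgroups S hS fun m hm => S5.minIdeal_to_FMinJ hηZ.surj (hmin m hm)
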